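/- Let H_n = Ω_n − ᵀΩ̄_n, where Ω_n is the n×n matrix with diagonal entries 1, subdiagonal entries all 1−t, and zeros above the diagonal, and the bar is the involution t ↦ t⁻¹. Then det H_n = (−1)^n [ (1−t)^{n−1} − (t⁻¹ − 1)^{n−1} ]. -/

import Mathlib

open Matrix

/-- The lower-triangular matrix `Ω_n` with `1`'s on the diagonal and all entries
below the diagonal equal to `1 - s`. -/
def omegaMat (K : Type*) [Field K] (s : K) (n : ℕ) : Matrix (Fin n) (Fin n) K :=
  Matrix.of fun j k => if j = k then 1 else if k < j then 1 - s else 0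

/-- The bidiagonal matrix with `-a` on the diagonal, `b` on the superdiagonal,
except the last row which is `(a, a, ..., a, 0)`. -/
def Bmat (K : Type*) [Field K] (a b : K) (n : ℕ) : Matrix (Fin n) (Fin n) K :=
  Matrix.of fun i j =>
    if (i : ℕ) = n - 1 then (if (j : ℕ) = n - 1 then 0 else a)
    else if (j : ℕ) = (i : ℕ) then -a
    else if (j : ℕ) = (i : ℕ) + 1 then b else 0

lemma Bmat_det {K : Type*} [Field K] (a b : K) (n : ℕ) :
    (Bmat K a b (n + 1)).det =
      (-1) ^ n * a * ∑ j ∈ Finset.range n, a ^ j * b ^ (n - j) := by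
  induction n with
  | zero =>
    simp [Bmat, Matrix.det_fin_one, Matrix.of_apply]
  | succ n ih =>
    rw [Matrix.det_succ_column_zero (Bmat K a b (n + 2))]
    rw [Fin.sum_univ_succ, Fin.sum_univ_castSucc]
    have hmid : ∀ i : Fin n,
        (-1 : K) ^ ((i.castSucc.succ : Fin (n + 2)) : ℕ) *
          Bmat K a b (n + 2) i.castSucc.succ 0 *
          ((Bmat K a b (n + 2)).submatrix (i.castSucc.succ).succAbove Fin.succ).det = 0 := by
      intro i
      have h2 : Bmat K a b (n + 2) i.castSucc.succ 0 = 0 := by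
        simp only [Bmat, Matrix.of_apply, Fin.val_succ, Fin.coe_castSucc, Fin.val_zero]
        split_ifs <;> first | rfl | omega | contradiction
      rw [h2]; ring
    rw [Finset.sum_congr rfl fun i _ => hmid i, Finset.sum_const_zero]
    -- first minor: remove row 0 and column 0
    have hminor0 : (Bmat K a b (n + 2)).submatrix (Fin.succAbove 0) Fin.succ =
        Bmat K a b (n + 1) := by
      ext i j
      simp only [Matrix.submatrix_apply, Fin.succAbove_zero, Bmat, Matrix.of_apply,
        Fin.val_succ]
      by_cases hi : (i : ℕ) = n + 1 - 1
      · rw [if_pos (by omega), if_pos hi]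
        by_cases hj : (j : ℕ) = n + 1 - 1
        · rw [if_pos (by omega), if_pos hj]
        · rw [if_neg (by omega), if_neg hj]
      · rw [if_neg (by omega), if_neg hi]
        by_cases hj : (j : ℕ) = (i : ℕ)
        · rw [if_pos (by omega), if_pos hj]
        · rw [if_neg (by omega), if_neg hj]
          by_cases hj2 : (j : ℕ) = (i : ℕ) + 1
          · rw [if_pos (by omega), if_pos hj2]
          · rw [if_neg (by omega), if_neg hj2]
    -- last minor: remove last row and column 0, lower triangular with diag b
    have hminorlast :
        ((Bmat K a b (n + 2)).submatrix (Fin.last (n + 1)).succAbove Fin.succ).det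
          = b ^ (n + 1) := by
      rw [Matrix.det_of_lowerTriangular]
      · rw [Fin.succAbove_last]
        have hd : ∀ i : Fin (n + 1),
            (Bmat K a b (n + 2)).submatrix Fin.castSucc Fin.succ i i = b := by
          intro i
          simp only [Matrix.submatrix_apply, Bmat, Matrix.of_apply, Fin.val_succ,
            Fin.coe_castSucc]
          rw [if_neg (by omega), if_neg (by omega)]
          simp
        rw [Finset.prod_congr rfl fun i _ => hd i]
        simp
      · intro i j hij
        rw [Fin.succAbove_last]
        simp only [Matrix.submatrix_apply, Bmat, Matrix.of_apply, Fin.val_succ,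
          Fin.coe_castSucc]
        have hij' : (i : ℕ) < (j : ℕ) := hij
        rw [if_neg (by omega), if_neg (by omega), if_neg (by omega)]
    have hB00 : Bmat K a b (n + 2) 0 0 = -a := by
      simp only [Bmat, Matrix.of_apply, Fin.val_zero]
      rw [if_neg (by omega)]
      simp
    have hBlast0 : Bmat K a b (n + 2) (Fin.last n).succ 0 = a := by
      simp only [Bmat, Matrix.of_apply, Fin.val_succ, Fin.val_last, Fin.val_zero]
      split_ifs <;> first | rfl | omega
    have hsucclast : ((Fin.last n).succ : Fin (n+2)).succAbove = Fin.castSucc := by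
      rw [Fin.succ_last, Fin.succAbove_last]
    rw [hminor0] at *
    rw [hB00, hBlast0, ih]
    rw [show ((Fin.last n).succ : Fin (n+2)).succAbove = (Fin.last (n+1)).succAbove by
      rw [Fin.succ_last]]
    rw [hminorlast]
    have hvl : (((Fin.last n).succ : Fin (n + 2)) : ℕ) = n + 1 := by simp
    rw [hvl]
    have hsum : ∑ j ∈ Finset.range (n + 1), a ^ j * b ^ (n + 1 - j)
        = b ^ (n + 1) + ∑ j ∈ Finset.range n, a ^ (j + 1) * b ^ (n - j) := by
      rw [Finset.sum_range_succ']
      have h3 : ∀ j ∈ Finset.range n, a ^ (j + 1) * b ^ (n + 1 - (j + 1))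
          = a ^ (j + 1) * b ^ (n - j) := fun j _ => by congr 2; omega
      rw [Finset.sum_congr rfl h3]
      simp only [Nat.sub_zero, pow_zero, one_mul]
      ring
    rw [hsum]
    rw [show ((0 : Fin (n+2)) : ℕ) = 0 from rfl]
    have expand : (-1:K)^(n+1) * a * (b^(n+1) + ∑ j ∈ Finset.range n, a^(j+1)*b^(n-j))
        = (-1:K)^(n+1) * a * b^(n+1)
          + ∑ j ∈ Finset.range n, (-1:K)^(n+1) * a * (a^(j+1)*b^(n-j)) := by
      rw [mul_add, Finset.mul_sum]
    have expand2 : (-1:K)^(0:ℕ) * (-a) * ((-1:K)^n * a * ∑ j ∈ Finset.range n, a^j*b^(n-j))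
        = ∑ j ∈ Finset.range n, (-1:K)^(n+1) * a * (a^(j+1)*b^(n-j)) := by
      rw [Finset.mul_sum, Finset.mul_sum]
      refine Finset.sum_congr rfl fun j _ => ?_
      ring
    rw [expand, expand2]
    ring

lemma sum_if_val {K : Type*} [Field K] (n m : ℕ) (f : Fin n → K) :
    (∑ k : Fin n, if (k : ℕ) = m then f k else 0) =
      if h : m < n then f ⟨m, h⟩ else 0 := by
  split_ifs with h
  · rw [Finset.sum_eq_single (⟨m, h⟩ : Fin n)]
    · simp
    · intro k _ hk
      exact if_neg fun hkm => hk (Fin.ext hkm)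
    · simp
  · refine Finset.sum_eq_zero fun k _ => if_neg fun hkm => h ?_
    omega

/-- Elementary row-operation matrix: `I` minus the superdiagonal shift. -/
def Fmat (K : Type*) [Field K] (n : ℕ) : Matrix (Fin n) (Fin n) K :=
  Matrix.of fun i k =>
    (if (k : ℕ) = (i : ℕ) then (1 : K) else 0) - (if (k : ℕ) = (i : ℕ) + 1 then 1 else 0)

lemma Fmat_det {K : Type*} [Field K] (n : ℕ) : (Fmat K n).det = 1 := by
  rw [Matrix.det_of_upperTriangular]
  · rw [Finset.prod_congr rfl (g := fun _ => (1:K)) fun i _ => by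
      simp only [Fmat, Matrix.of_apply]
      rw [if_neg (show ¬((i:ℕ) = (i:ℕ)+1) by omega)]
      simp]
    simp
  · intro i j hij
    have hij' : (j : ℕ) < (i : ℕ) := hij
    simp only [Fmat, Matrix.of_apply]
    rw [if_neg (by omega), if_neg (by omega)]
    ring

lemma Fmat_mul {K : Type*} [Field K] (t : K) (n : ℕ) :
    Fmat K n * (omegaMat K t n - (omegaMat K t⁻¹ n)ᵀ) =
      Bmat K (1 - t) (t⁻¹ - 1) n := by
  ext i j
  rw [Matrix.mul_apply]
  simp only [Fmat, Matrix.of_apply, sub_mul, ite_mul, one_mul, zero_mul]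
  rw [Finset.sum_sub_distrib, sum_if_val, sum_if_val, dif_pos i.isLt]
  simp only [Fin.eta]
  simp only [omegaMat, Bmat, Matrix.sub_apply, Matrix.transpose_apply, Matrix.of_apply,
    Fin.ext_iff, Fin.lt_iff_val_lt_val]
  by_cases hlast : (i : ℕ) = n - 1
  · rw [dif_neg (by have := i.isLt; omega), if_pos hlast]
    split_ifs <;> first | ring1 | (exfalso; have := i.isLt; have := j.isLt; omega)
  · have hlt : (i : ℕ) + 1 < n := by have := i.isLt; omega
    rw [dif_pos hlt, if_neg hlast]
    split_ifs <;> first | ring1 | (exfalso; have := i.isLt; have := j.isLt; omega)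

/-- `det H_n = (-1)^n [(1-t)^{n-1} - (t⁻¹-1)^{n-1}]`, where
`H_n = Ω_n - ᵀΩ̄_n`. -/
theorem stmt_9 (K : Type*) [Field K] (t : K) (ht : t ≠ 0) (n : ℕ) (hn : 1 ≤ n) :
    (omegaMat K t n - (omegaMat K t⁻¹ n)ᵀ).det =
      (-1) ^ n * ((1 - t) ^ (n - 1) - (t⁻¹ - 1) ^ (n - 1)) := by
  obtain ⟨m, rfl⟩ : ∃ m, n = m + 1 := ⟨n - 1, by omega⟩
  have hdet : (omegaMat K t (m+1) - (omegaMat K t⁻¹ (m+1))ᵀ).det =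
      (Bmat K (1 - t) (t⁻¹ - 1) (m+1)).det := by
    rw [← Fmat_mul t (m+1), Matrix.det_mul, Fmat_det, one_mul]
  rw [hdet, Bmat_det]
  set a := 1 - t with ha
  set b := t⁻¹ - 1 with hb
  have hab : a * b = -(a - b) := by
    rw [ha, hb]
    field_simp
    ring
  have hsum : ∑ j ∈ Finset.range m, a ^ j * b ^ (m - j)
      = (∑ j ∈ Finset.range m, a ^ j * b ^ (m - 1 - j)) * b := by
    rw [Finset.sum_mul]
    refine Finset.sum_congr rfl fun j hj => ?_
    have hj' : j < m := Finset.mem_range.mp hj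
    rw [mul_assoc, ← pow_succ]
    congr 2
    omega
  rw [hsum]
  have := geom_sum₂_mul a b m
  simp only [add_tsub_cancel_right]
  calc (-1:K) ^ m * a * ((∑ j ∈ Finset.range m, a ^ j * b ^ (m - 1 - j)) * b)
      = (-1) ^ m * (a * b) * (∑ j ∈ Finset.range m, a ^ j * b ^ (m - 1 - j)) := by ring
    _ = (-1) ^ m * (-(a - b)) * (∑ j ∈ Finset.range m, a ^ j * b ^ (m - 1 - j)) := by
        rw [hab]
    _ = (-1) ^ (m+1) * ((∑ j ∈ Finset.range m, a ^ j * b ^ (m - 1 - j)) * (a - b)) := by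
        ring
    _ = (-1) ^ (m+1) * (a ^ m - b ^ m) := by rw [geom_sum₂_mul]
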